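/- In a Euclidean Hurwitz algebra, if x, y, z are orthonormal vectors each orthogonal to the unit element 1, and additionally x · y is orthogonal to z, then (x · y) · (y · z) = x · z. -/

import Mathlib

open RealInnerProductSpace

theorem stmt_10 {A : Type*} [NormedAddCommGroup A] [InnerProductSpace ℝ A]
    (mul : A →ₗ[ℝ] A →ₗ[ℝ] A) (e : A) (he : ‖e‖ = 1)
    (hul : ∀ x, mul e x = x) (hur : ∀ x, mul x e = x)
    (hmon : ∀ x y, ‖mul x y‖ = ‖x‖ * ‖y‖)
    (x y z : A) (hx : ‖x‖ = 1) (hy : ‖y‖ = 1) (hz : ‖z‖ = 1)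
    (hxe : (inner ℝ x e : ℝ) = 0) (hye : (inner ℝ y e : ℝ) = 0) (hze : (inner ℝ z e : ℝ) = 0)
    (hxy : (inner ℝ x y : ℝ) = 0) (hxz : (inner ℝ x z : ℝ) = 0) (hyz : (inner ℝ y z : ℝ) = 0)
    (hxyz : (inner ℝ (mul x y) z : ℝ) = 0) :
    mul (mul x y) (mul y z) = mul x z := by
  have N1 : ∀ a b d : A, ⟪mul a b, mul a d⟫ = ‖a‖ ^ 2 * ⟪b, d⟫ := by
    intro a b d
    have h1 := real_inner_add_add_self (mul a b) (mul a d)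
    rw [← map_add] at h1
    simp only [real_inner_self_eq_norm_sq, hmon] at h1
    have h2 := real_inner_add_add_self b d
    simp only [real_inner_self_eq_norm_sq] at h2
    linear_combination (‖a‖ ^ 2 * h2 - h1) / 2
  have E : ∀ a b c d : A,
      ⟪mul a b, mul c d⟫ + ⟪mul c b, mul a d⟫ = 2 * ⟪a, c⟫ * ⟪b, d⟫ := by
    intro a b c d
    have h1 := N1 (a + c) b d
    have hb : mul (a + c) b = mul a b + mul c b := by rw [map_add]; rfl
    have hd : mul (a + c) d = mul a d + mul c d := by rw [map_add]; rfl
    rw [hb, hd, inner_add_left, inner_add_right, inner_add_right] at h1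
    have hnc : (‖a + c‖ : ℝ) ^ 2 = ‖a‖ ^ 2 + 2 * ⟪a, c⟫ + ‖c‖ ^ 2 := by
      rw [← real_inner_self_eq_norm_sq, ← real_inner_self_eq_norm_sq,
        ← real_inner_self_eq_norm_sq]
      exact real_inner_add_add_self a c
    rw [hnc] at h1
    have h2 := N1 a b d
    have h3 := N1 c b d
    linarith
  have f1 : ⟪mul x y, e⟫ = 0 := by
    have h := E x y e e
    simp only [hul, hur] at h
    rw [hxe, real_inner_comm x y, hxy] at h
    linarith
  have f2 : ⟪y, mul x y⟫ = 0 := by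
    have h := E x y e y
    simp only [hul] at h
    rw [hxe] at h
    have hc := real_inner_comm (mul x y) y
    linarith
  have f3 : ⟪y, mul x z⟫ = 0 := by
    have h := E x y e z
    simp only [hul] at h
    rw [hxe, hxyz] at h
    linarith
  have f4 : ⟪mul x z, e⟫ = 0 := by
    have h := E x z e e
    simp only [hul, hur] at h
    rw [hxe, real_inner_comm x z, hxz] at h
    linarith
  have hyy : (⟪y, y⟫) = 1 := by
    rw [real_inner_self_eq_norm_sq, hy]; norm_num
  have f5 : ∀ v : A, ⟪mul y y, v⟫ = -⟪e, v⟫ := by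
    intro v
    have h := E y y e v
    simp only [hul] at h
    rw [hye] at h
    have h2 := N1 y e v
    rw [hur, hy] at h2
    norm_num at h2
    linarith
  apply ext_inner_right ℝ
  intro w
  have S1 := E (mul x y) (mul y z) e w
  simp only [hul] at S1
  rw [f1] at S1
  have S2 := E y z (mul x y) w
  rw [f2] at S2
  have S3 := E (mul x y) z (mul y w) e
  simp only [hur] at S3
  rw [hze] at S3
  have S4 := E (mul y w) z x y
  rw [real_inner_comm y z, hyz] at S4
  have S5 := E (mul y w) y (mul x z) e
  simp only [hur] at S5
  rw [hye] at S5
  have S6 := E (mul x z) y y w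
  rw [real_inner_comm y (mul x z), f3] at S6
  have S7 := f5 (mul (mul x z) w)
  have S8 := E (mul x z) w e e
  simp only [hul, hur] at S8
  rw [f4] at S8
  have C1 := real_inner_comm (mul x z) (mul (mul y w) y)
  have C2 := real_inner_comm e (mul (mul x z) w)
  have C3 := real_inner_comm w (mul x z)
  linarith
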